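/- For each j ∈ {1,2,3,4}, the conjugated matrix A = B⁻¹·T_j·B is orthogonal (Aᵀ·A = I₈) and preserves the standard hyperKähler triple: Aᵀ·Ω_k·A = Ω_k for k = 1, 2, 3. Hence the conjugated group B⁻¹·G₁·B lies in Sp(2) ⊂ SO(8), i.e. the group G₁ preserves a hyperKähler structure on ℝ⁸. -/
import Mathlib


open Matrix

/-- The generator `T1`. -/
noncomputable def T1 : Matrix (Fin 8) (Fin 8) ℝ :=
  (1/2 : ℝ) • !![
    0, 0, -1, 1, 0, 0, 1, 1;
    0, 0, 1, 1, 0, 0, -1, 1;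
    1, -1, 0, 0, -1, -1, 0, 0;
    -1, -1, 0, 0, -1, 1, 0, 0;
    0, 0, 1, 1, 0, 0, 1, -1;
    0, 0, 1, -1, 0, 0, 1, 1;
    -1, 1, 0, 0, -1, -1, 0, 0;
    -1, -1, 0, 0, 1, -1, 0, 0]

/-- The generator `T2`. -/
noncomputable def T2 : Matrix (Fin 8) (Fin 8) ℝ :=
  (1/2 : ℝ) • !![
    0, 0, -1, -1, 0, 0, 1, -1;
    0, 0, -1, 1, 0, 0, 1, 1;
    1, 1, 0, 0, -1, 1, 0, 0;
    1, -1, 0, 0, 1, 1, 0, 0;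
    0, 0, 1, -1, 0, 0, 1, 1;
    0, 0, -1, -1, 0, 0, -1, 1;
    -1, -1, 0, 0, -1, 1, 0, 0;
    1, -1, 0, 0, -1, -1, 0, 0]

/-- The generator `T3`. -/
noncomputable def T3 : Matrix (Fin 8) (Fin 8) ℝ :=
  (1/2 : ℝ) • !![
    0, 0, 1, -1, 0, 0, -1, 1;
    0, 0, -1, -1, 0, 0, -1, -1;
    -1, 1, 0, 0, 1, -1, 0, 0;
    1, 1, 0, 0, -1, -1, 0, 0;
    0, 0, -1, 1, 0, 0, -1, 1;
    0, 0, 1, 1, 0, 0, -1, -1;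
    1, 1, 0, 0, 1, 1, 0, 0;
    -1, 1, 0, 0, -1, 1, 0, 0]

/-- The generator `T4`. -/
noncomputable def T4 : Matrix (Fin 8) (Fin 8) ℝ :=
  (1/2 : ℝ) • !![
    0, 0, -1, 1, 0, 0, -1, -1;
    0, 0, 1, 1, 0, 0, 1, -1;
    1, -1, 0, 0, 1, 1, 0, 0;
    -1, -1, 0, 0, 1, -1, 0, 0;
    0, 0, -1, -1, 0, 0, 1, -1;
    0, 0, -1, 1, 0, 0, 1, 1;
    1, -1, 0, 0, -1, -1, 0, 0;
    1, 1, 0, 0, 1, -1, 0, 0]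

/-- The basis-change matrix `B` of Appendix C. -/
noncomputable def B : Matrix (Fin 8) (Fin 8) ℝ :=
  !![
    1, 0, 0, 0, 0, 0, 0, 0;
    0, 1, 0, 0, 0, 0, 0, 0;
    0, 0, 0, 0, -1, 0, 0, 0;
    0, 0, 0, 0, 0, 1, 0, 0;
    0, 0, 1, 0, 0, 0, 0, 0;
    0, 0, 0, 1, 0, 0, 0, 0;
    0, 0, 0, 0, 0, 0, 1, 0;
    0, 0, 0, 0, 0, 0, 0, 1]

/-- The Kähler form `ω1` of the standard hyperKähler triple on ℝ⁸, as a matrix. -/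
def Omega1 : Matrix (Fin 8) (Fin 8) ℝ :=
  !![
    0, 1, 0, 0, 0, 0, 0, 0;
    -1, 0, 0, 0, 0, 0, 0, 0;
    0, 0, 0, 1, 0, 0, 0, 0;
    0, 0, -1, 0, 0, 0, 0, 0;
    0, 0, 0, 0, 0, 1, 0, 0;
    0, 0, 0, 0, -1, 0, 0, 0;
    0, 0, 0, 0, 0, 0, 0, 1;
    0, 0, 0, 0, 0, 0, -1, 0]

/-- The Kähler form `ω2` of the standard hyperKähler triple on ℝ⁸, as a matrix. -/
def Omega2 : Matrix (Fin 8) (Fin 8) ℝ :=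
  !![
    0, 0, 1, 0, 0, 0, 0, 0;
    0, 0, 0, -1, 0, 0, 0, 0;
    -1, 0, 0, 0, 0, 0, 0, 0;
    0, 1, 0, 0, 0, 0, 0, 0;
    0, 0, 0, 0, 0, 0, 1, 0;
    0, 0, 0, 0, 0, 0, 0, -1;
    0, 0, 0, 0, -1, 0, 0, 0;
    0, 0, 0, 0, 0, 1, 0, 0]

/-- The Kähler form `ω3` of the standard hyperKähler triple on ℝ⁸, as a matrix. -/
def Omega3 : Matrix (Fin 8) (Fin 8) ℝ :=
  !![
    0, 0, 0, 1, 0, 0, 0, 0;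
    0, 0, 1, 0, 0, 0, 0, 0;
    0, -1, 0, 0, 0, 0, 0, 0;
    -1, 0, 0, 0, 0, 0, 0, 0;
    0, 0, 0, 0, 0, 0, 0, 1;
    0, 0, 0, 0, 0, 0, 1, 0;
    0, 0, 0, 0, 0, -1, 0, 0;
    0, 0, 0, 0, -1, 0, 0, 0]


/-! ### Auxiliary material for the proof -/

lemma hkv0 {α : Type*} (a b c d e f g h : α) : ![a,b,c,d,e,f,g,h] (0 : Fin 8) = a := rfl
lemma hkv1 {α : Type*} (a b c d e f g h : α) : ![a,b,c,d,e,f,g,h] (1 : Fin 8) = b := rfl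
lemma hkv2 {α : Type*} (a b c d e f g h : α) : ![a,b,c,d,e,f,g,h] (2 : Fin 8) = c := rfl
lemma hkv3 {α : Type*} (a b c d e f g h : α) : ![a,b,c,d,e,f,g,h] (3 : Fin 8) = d := rfl
lemma hkv4 {α : Type*} (a b c d e f g h : α) : ![a,b,c,d,e,f,g,h] (4 : Fin 8) = e := rfl
lemma hkv5 {α : Type*} (a b c d e f g h : α) : ![a,b,c,d,e,f,g,h] (5 : Fin 8) = f := rfl
lemma hkv6 {α : Type*} (a b c d e f g h : α) : ![a,b,c,d,e,f,g,h] (6 : Fin 8) = g := rfl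
lemma hkv7 {α : Type*} (a b c d e f g h : α) : ![a,b,c,d,e,f,g,h] (7 : Fin 8) = h := rfl

def Az1 : Matrix (Fin 8) (Fin 8) ℤ :=
  !![0, 0, -1, 1, 0, 0, 1, 1;
    0, 0, 1, 1, 0, 0, -1, 1;
    1, -1, 0, 0, -1, -1, 0, 0;
    -1, -1, 0, 0, -1, 1, 0, 0;
    0, 0, 1, 1, 0, 0, 1, -1;
    0, 0, 1, -1, 0, 0, 1, 1;
    -1, 1, 0, 0, -1, -1, 0, 0;
    -1, -1, 0, 0, 1, -1, 0, 0]
def Az2 : Matrix (Fin 8) (Fin 8) ℤ :=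
  !![0, 0, -1, -1, 0, 0, 1, -1;
    0, 0, -1, 1, 0, 0, 1, 1;
    1, 1, 0, 0, -1, 1, 0, 0;
    1, -1, 0, 0, 1, 1, 0, 0;
    0, 0, 1, -1, 0, 0, 1, 1;
    0, 0, -1, -1, 0, 0, -1, 1;
    -1, -1, 0, 0, -1, 1, 0, 0;
    1, -1, 0, 0, -1, -1, 0, 0]
def Az3 : Matrix (Fin 8) (Fin 8) ℤ :=
  !![0, 0, 1, -1, 0, 0, -1, 1;
    0, 0, -1, -1, 0, 0, -1, -1;
    -1, 1, 0, 0, 1, -1, 0, 0;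
    1, 1, 0, 0, -1, -1, 0, 0;
    0, 0, -1, 1, 0, 0, -1, 1;
    0, 0, 1, 1, 0, 0, -1, -1;
    1, 1, 0, 0, 1, 1, 0, 0;
    -1, 1, 0, 0, -1, 1, 0, 0]
def Az4 : Matrix (Fin 8) (Fin 8) ℤ :=
  !![0, 0, -1, 1, 0, 0, -1, -1;
    0, 0, 1, 1, 0, 0, 1, -1;
    1, -1, 0, 0, 1, 1, 0, 0;
    -1, -1, 0, 0, 1, -1, 0, 0;
    0, 0, -1, -1, 0, 0, 1, -1;
    0, 0, -1, 1, 0, 0, 1, 1;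
    1, -1, 0, 0, -1, -1, 0, 0;
    1, 1, 0, 0, 1, -1, 0, 0]
def Bz : Matrix (Fin 8) (Fin 8) ℤ :=
  !![1, 0, 0, 0, 0, 0, 0, 0;
    0, 1, 0, 0, 0, 0, 0, 0;
    0, 0, 0, 0, -1, 0, 0, 0;
    0, 0, 0, 0, 0, 1, 0, 0;
    0, 0, 1, 0, 0, 0, 0, 0;
    0, 0, 0, 1, 0, 0, 0, 0;
    0, 0, 0, 0, 0, 0, 1, 0;
    0, 0, 0, 0, 0, 0, 0, 1]
def Oz1 : Matrix (Fin 8) (Fin 8) ℤ :=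
  !![0, 1, 0, 0, 0, 0, 0, 0;
    -1, 0, 0, 0, 0, 0, 0, 0;
    0, 0, 0, 1, 0, 0, 0, 0;
    0, 0, -1, 0, 0, 0, 0, 0;
    0, 0, 0, 0, 0, 1, 0, 0;
    0, 0, 0, 0, -1, 0, 0, 0;
    0, 0, 0, 0, 0, 0, 0, 1;
    0, 0, 0, 0, 0, 0, -1, 0]
def Oz2 : Matrix (Fin 8) (Fin 8) ℤ :=
  !![0, 0, 1, 0, 0, 0, 0, 0;
    0, 0, 0, -1, 0, 0, 0, 0;
    -1, 0, 0, 0, 0, 0, 0, 0;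
    0, 1, 0, 0, 0, 0, 0, 0;
    0, 0, 0, 0, 0, 0, 1, 0;
    0, 0, 0, 0, 0, 0, 0, -1;
    0, 0, 0, 0, -1, 0, 0, 0;
    0, 0, 0, 0, 0, 1, 0, 0]
def Oz3 : Matrix (Fin 8) (Fin 8) ℤ :=
  !![0, 0, 0, 1, 0, 0, 0, 0;
    0, 0, 1, 0, 0, 0, 0, 0;
    0, -1, 0, 0, 0, 0, 0, 0;
    -1, 0, 0, 0, 0, 0, 0, 0;
    0, 0, 0, 0, 0, 0, 0, 1;
    0, 0, 0, 0, 0, 0, 1, 0;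
    0, 0, 0, 0, 0, -1, 0, 0;
    0, 0, 0, 0, -1, 0, 0, 0]

noncomputable def cIR : ℤ →+* ℝ := Int.castRingHom ℝ

lemma hkMapZsmul (n : ℤ) (X : Matrix (Fin 8) (Fin 8) ℤ) :
    (n • X).map cIR = (n : ℝ) • X.map cIR := by
  ext i j
  simp only [Matrix.map_apply, Matrix.smul_apply, smul_eq_mul, cIR, Int.coe_castRingHom]
  push_cast
  ring

lemma hBc : B = Bz.map cIR := by
  ext i j
  fin_cases i <;> fin_cases j <;>
    simp only [Matrix.cons_val_zero', Matrix.cons_val_succ', Matrix.cons_val_zero,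
      Matrix.cons_val_succ, Matrix.of_apply, Int.coe_castRingHom, B, Bz, cIR, Matrix.map_apply,
      hkv0, hkv1, hkv2, hkv3, hkv4, hkv5, hkv6, hkv7] <;> norm_num

lemma hO1c : Omega1 = Oz1.map cIR := by
  ext i j
  fin_cases i <;> fin_cases j <;>
    simp only [Matrix.cons_val_zero', Matrix.cons_val_succ', Matrix.cons_val_zero,
      Matrix.cons_val_succ, Matrix.of_apply, Int.coe_castRingHom, Omega1, Oz1, cIR, Matrix.map_apply,
      hkv0, hkv1, hkv2, hkv3, hkv4, hkv5, hkv6, hkv7] <;> norm_num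

lemma hO2c : Omega2 = Oz2.map cIR := by
  ext i j
  fin_cases i <;> fin_cases j <;>
    simp only [Matrix.cons_val_zero', Matrix.cons_val_succ', Matrix.cons_val_zero,
      Matrix.cons_val_succ, Matrix.of_apply, Int.coe_castRingHom, Omega2, Oz2, cIR, Matrix.map_apply,
      hkv0, hkv1, hkv2, hkv3, hkv4, hkv5, hkv6, hkv7] <;> norm_num

lemma hO3c : Omega3 = Oz3.map cIR := by
  ext i j
  fin_cases i <;> fin_cases j <;>
    simp only [Matrix.cons_val_zero', Matrix.cons_val_succ', Matrix.cons_val_zero,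
      Matrix.cons_val_succ, Matrix.of_apply, Int.coe_castRingHom, Omega3, Oz3, cIR, Matrix.map_apply,
      hkv0, hkv1, hkv2, hkv3, hkv4, hkv5, hkv6, hkv7] <;> norm_num

lemma hT1c : T1 = (1/2 : ℝ) • Az1.map cIR := by
  ext i j
  fin_cases i <;> fin_cases j <;>
    simp only [Matrix.cons_val_zero', Matrix.cons_val_succ', Matrix.cons_val_zero,
      Matrix.cons_val_succ, Matrix.of_apply, Int.coe_castRingHom, T1, Az1, cIR, Matrix.map_apply, Matrix.smul_apply,
      hkv0, hkv1, hkv2, hkv3, hkv4, hkv5, hkv6, hkv7] <;> norm_num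

lemma hT2c : T2 = (1/2 : ℝ) • Az2.map cIR := by
  ext i j
  fin_cases i <;> fin_cases j <;>
    simp only [Matrix.cons_val_zero', Matrix.cons_val_succ', Matrix.cons_val_zero,
      Matrix.cons_val_succ, Matrix.of_apply, Int.coe_castRingHom, T2, Az2, cIR, Matrix.map_apply, Matrix.smul_apply,
      hkv0, hkv1, hkv2, hkv3, hkv4, hkv5, hkv6, hkv7] <;> norm_num

lemma hT3c : T3 = (1/2 : ℝ) • Az3.map cIR := by
  ext i j
  fin_cases i <;> fin_cases j <;>
    simp only [Matrix.cons_val_zero', Matrix.cons_val_succ', Matrix.cons_val_zero,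
      Matrix.cons_val_succ, Matrix.of_apply, Int.coe_castRingHom, T3, Az3, cIR, Matrix.map_apply, Matrix.smul_apply,
      hkv0, hkv1, hkv2, hkv3, hkv4, hkv5, hkv6, hkv7] <;> norm_num

lemma hT4c : T4 = (1/2 : ℝ) • Az4.map cIR := by
  ext i j
  fin_cases i <;> fin_cases j <;>
    simp only [Matrix.cons_val_zero', Matrix.cons_val_succ', Matrix.cons_val_zero,
      Matrix.cons_val_succ, Matrix.of_apply, Int.coe_castRingHom, T4, Az4, cIR, Matrix.map_apply, Matrix.smul_apply,
      hkv0, hkv1, hkv2, hkv3, hkv4, hkv5, hkv6, hkv7] <;> norm_num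

lemma hBorth : Bᵀ * B = 1 := by
  have hz : Bzᵀ * Bz = (1 : Matrix (Fin 8) (Fin 8) ℤ) := by decide
  rw [hBc, ← Matrix.transpose_map, ← Matrix.map_mul, hz,
    Matrix.map_one cIR (map_zero cIR) (map_one cIR)]

lemma hBinv : B⁻¹ = Bᵀ := Matrix.inv_eq_left_inv hBorth

lemma key (Az : Matrix (Fin 8) (Fin 8) ℤ) (T : Matrix (Fin 8) (Fin 8) ℝ)
    (hTc : T = (1/2 : ℝ) • Az.map cIR)
    (h1 : (Bzᵀ * Az * Bz)ᵀ * (Bzᵀ * Az * Bz) = (4 : ℤ) • 1)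
    (h2 : (Bzᵀ * Az * Bz)ᵀ * Oz1 * (Bzᵀ * Az * Bz) = (4 : ℤ) • Oz1)
    (h3 : (Bzᵀ * Az * Bz)ᵀ * Oz2 * (Bzᵀ * Az * Bz) = (4 : ℤ) • Oz2)
    (h4 : (Bzᵀ * Az * Bz)ᵀ * Oz3 * (Bzᵀ * Az * Bz) = (4 : ℤ) • Oz3) :
    (B⁻¹ * T * B)ᵀ * (B⁻¹ * T * B) = 1 ∧
      (B⁻¹ * T * B)ᵀ * Omega1 * (B⁻¹ * T * B) = Omega1 ∧
      (B⁻¹ * T * B)ᵀ * Omega2 * (B⁻¹ * T * B) = Omega2 ∧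
      (B⁻¹ * T * B)ᵀ * Omega3 * (B⁻¹ * T * B) = Omega3 := by
  have hA : B⁻¹ * T * B = (1/2 : ℝ) • ((Bzᵀ * Az * Bz).map cIR) := by
    rw [hBinv, hTc, hBc]
    simp only [Matrix.map_mul, Matrix.transpose_map, Matrix.mul_smul, Matrix.smul_mul]
  refine ⟨?_, ?_, ?_, ?_⟩ <;> rw [hA]
  · rw [Matrix.transpose_smul, Matrix.smul_mul, Matrix.mul_smul, smul_smul,
      ← Matrix.transpose_map, ← Matrix.map_mul, h1, hkMapZsmul, smul_smul,
      Matrix.map_one cIR (map_zero cIR) (map_one cIR)]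
    norm_num
  · rw [hO1c, Matrix.transpose_smul, Matrix.smul_mul, Matrix.mul_smul, Matrix.smul_mul,
      smul_smul, ← Matrix.transpose_map, ← Matrix.map_mul, ← Matrix.map_mul, h2,
      hkMapZsmul, smul_smul]
    norm_num
  · rw [hO2c, Matrix.transpose_smul, Matrix.smul_mul, Matrix.mul_smul, Matrix.smul_mul,
      smul_smul, ← Matrix.transpose_map, ← Matrix.map_mul, ← Matrix.map_mul, h3,
      hkMapZsmul, smul_smul]
    norm_num
  · rw [hO3c, Matrix.transpose_smul, Matrix.smul_mul, Matrix.mul_smul, Matrix.smul_mul,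
      smul_smul, ← Matrix.transpose_map, ← Matrix.map_mul, ← Matrix.map_mul, h4,
      hkMapZsmul, smul_smul]
    norm_num

/-- For each generator `T` of `G₁`, the conjugated matrix
`A = B⁻¹ * T * B` is orthogonal and preserves the standard hyperKähler triple
`Ω₁, Ω₂, Ω₃`; hence `B⁻¹ · G₁ · B ⊆ Sp(2) ⊂ SO(8)`, i.e. `G₁` preserves a
hyperKähler structure on ℝ⁸. -/
theorem conjugated_generators_preserve_hyperkahler_triple :
    ∀ T ∈ ({T1, T2, T3, T4} : Set (Matrix (Fin 8) (Fin 8) ℝ)),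
      (B⁻¹ * T * B)ᵀ * (B⁻¹ * T * B) = 1 ∧
      (B⁻¹ * T * B)ᵀ * Omega1 * (B⁻¹ * T * B) = Omega1 ∧
      (B⁻¹ * T * B)ᵀ * Omega2 * (B⁻¹ * T * B) = Omega2 ∧
      (B⁻¹ * T * B)ᵀ * Omega3 * (B⁻¹ * T * B) = Omega3 := by
  have k1 := key Az1 T1 hT1c (by decide) (by decide) (by decide) (by decide)
  have k2 := key Az2 T2 hT2c (by decide) (by decide) (by decide) (by decide)
  have k3 := key Az3 T3 hT3c (by decide) (by decide) (by decide) (by decide)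
  have k4 := key Az4 T4 hT4c (by decide) (by decide) (by decide) (by decide)
  rintro T hT
  simp only [Set.mem_insert_iff, Set.mem_singleton_iff] at hT
  rcases hT with rfl | rfl | rfl | rfl
  exacts [k1, k2, k3, k4]
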